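/- Let γ(p) for p ∈ (0,1/2) be defined implicitly by Γ(γ(p)+2α)/Γ(γ(p)+α) = ((2-2p)/(1-2p))·Γ(2α)/Γ(α), for fixed α > 0 (assume γ(p) is the unique positive solution and γ(p) → ∞ as p → 1/2⁻). Then lim_{p→1/2⁻} γ(p)^α (1-2p) = Γ(2α)/Γ(α), and hence γ(p) ~ (Γ(2α)/(Γ(α)(1-2p)))^{1/α} as p → 1/2⁻. -/

import Mathlib

open Real Topology Filter

-- helper limits
lemma aux_div_tendsto (c : ℝ) :
    Tendsto (fun x : ℝ => (x + c) / x) atTop (𝓝 1) := by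
  have h : Tendsto (fun x : ℝ => 1 + c / x) atTop (𝓝 1) := by
    have h0 : Tendsto (fun x : ℝ => c / x) atTop (𝓝 0) :=
      tendsto_const_nhds.div_atTop tendsto_id
    simpa using (tendsto_const_nhds (x := (1:ℝ))).add h0
  refine h.congr' ?_
  filter_upwards [eventually_gt_atTop 0] with x hx
  field_simp

lemma aux_div_tendsto' (c : ℝ) :
    Tendsto (fun x : ℝ => x / (x + c)) atTop (𝓝 1) := by
  have h : Tendsto (fun x : ℝ => 1 - c / (x + c)) atTop (𝓝 1) := by
    have h0 : Tendsto (fun x : ℝ => c / (x + c)) atTop (𝓝 0) :=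
      tendsto_const_nhds.div_atTop (tendsto_atTop_add_const_right _ c tendsto_id)
    simpa using (tendsto_const_nhds (x := (1:ℝ))).sub h0
  refine h.congr' ?_
  filter_upwards [eventually_gt_atTop (max 0 (-c))] with x hx
  have h1 : 0 < x + c := by
    have := lt_of_le_of_lt (le_max_right 0 (-c)) hx; linarith
  field_simp
  ring

-- Wendel for 0 < s < 1
lemma wendel_base {s : ℝ} (hs : 0 < s) (hs1 : s < 1) :
    Tendsto (fun x : ℝ => Gamma (x + s) / (x ^ s * Gamma x)) atTop (𝓝 1) := by
  have hlow : Tendsto (fun x : ℝ => (x / (x + s)) ^ (1 - s)) atTop (𝓝 1) := by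
    have := (aux_div_tendsto' s).rpow_const (p := 1 - s) (Or.inr (by linarith))
    simpa using this
  refine tendsto_of_tendsto_of_tendsto_of_le_of_le' hlow tendsto_const_nhds ?_ ?_
  · filter_upwards [eventually_gt_atTop 0] with x hx
    have hxs : 0 < x + s := by linarith
    have hG : 0 < Gamma x := Gamma_pos_of_pos hx
    have hGs : 0 < Gamma (x + s) := Gamma_pos_of_pos hxs
    -- lower bound: x * Γ x ≤ Γ(x+s) * (x+s)^(1-s)
    have key : Gamma (x + 1) ≤ Gamma (x + s) ^ s * Gamma (x + s + 1) ^ (1 - s) := by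
      have := Gamma_mul_add_mul_le_rpow_Gamma_mul_rpow_Gamma (s := x + s) (t := x + s + 1)
        (a := s) (b := 1 - s) hxs (by linarith) hs (by linarith) (by ring)
      have e : s * (x + s) + (1 - s) * (x + s + 1) = x + 1 := by ring
      rwa [e] at this
    rw [Gamma_add_one hx.ne', Gamma_add_one hxs.ne'] at key
    have key2 : x * Gamma x ≤ Gamma (x + s) * (x + s) ^ (1 - s) := by
      calc x * Gamma x ≤ Gamma (x + s) ^ s * ((x + s) * Gamma (x + s)) ^ (1 - s) := key
        _ = Gamma (x + s) * (x + s) ^ (1 - s) := by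
            rw [mul_rpow hxs.le hGs.le]
            rw [show Gamma (x+s) ^ s * ((x+s)^(1-s) * Gamma (x+s) ^ (1-s))
              = (Gamma (x+s) ^ s * Gamma (x+s) ^ (1-s)) * (x+s)^(1-s) by ring,
              ← rpow_add hGs]
            norm_num
    rw [div_rpow hx.le hxs.le, div_le_div_iff₀ (by positivity) (by positivity)]
    calc x ^ (1 - s) * (x ^ s * Gamma x) = x * Gamma x := by
          rw [show x ^ (1-s) * (x ^ s * Gamma x) = (x ^ (1-s) * x ^ s) * Gamma x by ring,
            ← rpow_add hx]
          norm_num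
      _ ≤ Gamma (x + s) * (x + s) ^ (1 - s) := key2
  · filter_upwards [eventually_gt_atTop 0] with x hx
    have hG : 0 < Gamma x := Gamma_pos_of_pos hx
    have key : Gamma (x + s) ≤ Gamma x ^ (1 - s) * Gamma (x + 1) ^ s := by
      have := Gamma_mul_add_mul_le_rpow_Gamma_mul_rpow_Gamma (s := x) (t := x + 1)
        (a := 1 - s) (b := s) hx (by linarith) (by linarith) hs (by ring)
      have e : (1 - s) * x + s * (x + 1) = x + s := by ring
      rwa [e] at this
    rw [Gamma_add_one hx.ne'] at key
    have key2 : Gamma x ^ (1 - s) * (x * Gamma x) ^ s = x ^ s * Gamma x := by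
      rw [mul_rpow hx.le hG.le,
        show Gamma x ^ (1-s) * (x ^ s * Gamma x ^ s) = (Gamma x ^ (1-s) * Gamma x ^ s) * x ^ s
          by ring, ← rpow_add hG]
      norm_num; ring
    rw [div_le_one (by positivity)]
    calc Gamma (x + s) ≤ Gamma x ^ (1-s) * (x * Gamma x) ^ s := key
      _ = x ^ s * Gamma x := key2

-- general Wendel
lemma wendel_aux : ∀ n : ℕ, ∀ a : ℝ, 0 < a → a ≤ n + 1 →
    Tendsto (fun x : ℝ => Gamma (x + a) / (x ^ a * Gamma x)) atTop (𝓝 1) := by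
  intro n
  induction n with
  | zero =>
    intro a ha ha1
    norm_num at ha1
    rcases lt_or_eq_of_le ha1 with h | h
    · exact wendel_base ha h
    · subst h
      refine tendsto_const_nhds.congr' ?_
      filter_upwards [eventually_gt_atTop 0] with x hx
      rw [Gamma_add_one hx.ne', rpow_one]
      field_simp [(Gamma_pos_of_pos hx).ne', hx.ne']
  | succ n ih =>
    intro a ha ha1
    rcases le_or_gt a (n + 1) with h | h
    · exact ih a ha h
    · have ha' : 0 < a - 1 := by
        have : (1:ℝ) ≤ n + 1 := by exact_mod_cast Nat.one_le_iff_ne_zero.mpr (by positivity)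
        linarith
      have h2 := ih (a - 1) ha' (by push_cast at ha1 ⊢; linarith)
      have h3 : Tendsto (fun x : ℝ => (x + (a - 1)) / x) atTop (𝓝 1) := aux_div_tendsto _
      have := h3.mul h2
      rw [one_mul] at this
      refine this.congr' ?_
      filter_upwards [eventually_gt_atTop 0] with x hx
      have hxa : 0 < x + (a - 1) := by linarith
      have e1 : Gamma (x + a) = (x + (a - 1)) * Gamma (x + (a - 1)) := by
        rw [show x + a = x + (a - 1) + 1 by ring, Gamma_add_one hxa.ne']
      have e2 : x ^ a = x ^ (a - 1) * x := by
        have e2' := rpow_add hx (a - 1) 1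
        rw [rpow_one, show a - 1 + 1 = a by ring] at e2'
        exact e2'
      rw [e1, e2]
      have hG : 0 < Gamma x := Gamma_pos_of_pos hx
      have hxp : (0:ℝ) < x ^ (a - 1) := rpow_pos_of_pos hx _
      field_simp

lemma wendel (a : ℝ) (ha : 0 < a) :
    Tendsto (fun x : ℝ => Gamma (x + a) / (x ^ a * Gamma x)) atTop (𝓝 1) := by
  obtain ⟨n, hn⟩ := exists_nat_ge a
  exact wendel_aux n a ha (by push_cast; linarith)

-- ratio lemma: x^α Γ(x+α)/Γ(x+2α) → 1
lemma ratio_tendsto (α : ℝ) (hα : 0 < α) :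
    Tendsto (fun x : ℝ => x ^ α * Gamma (x + α) / Gamma (x + 2 * α)) atTop (𝓝 1) := by
  have hg : Tendsto (fun x : ℝ => Gamma (x + α + α) / ((x + α) ^ α * Gamma (x + α)))
      atTop (𝓝 1) :=
    (wendel α hα).comp (tendsto_atTop_add_const_right _ α tendsto_id)
  have hq : Tendsto (fun x : ℝ => (x / (x + α)) ^ α) atTop (𝓝 1) := by
    have := (aux_div_tendsto' α).rpow_const (p := α) (Or.inr hα.le)
    simpa using this
  have := hq.div hg one_ne_zero
  rw [div_one] at this
  refine this.congr' ?_
  filter_upwards [eventually_gt_atTop 0] with x hx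
  have hxa : 0 < x + α := by linarith
  have hG1 : 0 < Gamma (x + α) := Gamma_pos_of_pos hxa
  have hG2 : 0 < Gamma (x + α + α) := Gamma_pos_of_pos (by linarith)
  have e : x + 2 * α = x + α + α := by ring
  simp only [Pi.div_apply]
  rw [e, div_rpow hx.le hxa.le]
  have hxp : (0:ℝ) < x ^ α := rpow_pos_of_pos hx _
  have hxap : (0:ℝ) < (x + α) ^ α := rpow_pos_of_pos hxa _
  field_simp

theorem stmt_17 (α : ℝ) (hα : 0 < α) (γ : ℝ → ℝ)
    (hpos : ∀ p ∈ Set.Ioo (0:ℝ) (1/2), 0 < γ p)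
    (heq : ∀ p ∈ Set.Ioo (0:ℝ) (1/2),
      Real.Gamma (γ p + 2*α) / Real.Gamma (γ p + α)
        = ((2-2*p)/(1-2*p)) * (Real.Gamma (2*α) / Real.Gamma α))
    (hdiv : Tendsto γ (𝓝[<] (1/2 : ℝ)) atTop) :
    Tendsto (fun p => (γ p) ^ α * (1-2*p)) (𝓝[<] (1/2 : ℝ))
      (𝓝 (Real.Gamma (2*α) / Real.Gamma α)) ∧
    Tendsto (fun p => γ p / (Real.Gamma (2*α) / (Real.Gamma α * (1-2*p))) ^ (1/α))
      (𝓝[<] (1/2 : ℝ)) (𝓝 1) := by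
  set C : ℝ := Real.Gamma (2*α) / Real.Gamma α with hCdef
  have hC : 0 < C := div_pos (Gamma_pos_of_pos (by linarith)) (Gamma_pos_of_pos hα)
  have hIoo : ∀ᶠ p in 𝓝[<] (1/2 : ℝ), p ∈ Set.Ioo (0:ℝ) (1/2) :=
    Ioo_mem_nhdsLT (by norm_num)
  -- first limit
  have hR : Tendsto (fun p => (γ p) ^ α * Gamma (γ p + α) / Gamma (γ p + 2*α))
      (𝓝[<] (1/2 : ℝ)) (𝓝 1) := (ratio_tendsto α hα).comp hdiv
  have hv : Tendsto (fun p : ℝ => 2 - 2*p) (𝓝[<] (1/2 : ℝ)) (𝓝 1) := by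
    have : Tendsto (fun p : ℝ => 2 - 2*p) (𝓝 (1/2 : ℝ)) (𝓝 (2 - 2*(1/2))) :=
      (continuous_const.sub (continuous_const.mul continuous_id)).tendsto _
    norm_num at this
    exact this.mono_left nhdsWithin_le_nhds
  have h1 : Tendsto (fun p => (γ p) ^ α * (1-2*p)) (𝓝[<] (1/2 : ℝ)) (𝓝 C) := by
    have hmul := (hv.mul hR).const_mul C
    simp only [mul_one] at hmul
    refine hmul.congr' ?_
    filter_upwards [hIoo] with p hp
    obtain ⟨hp0, hp2⟩ := hp
    have hγ := hpos p ⟨hp0, hp2⟩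
    have hu : 0 < 1 - 2*p := by linarith
    have hv' : 0 < 2 - 2*p := by linarith
    have hGa : 0 < Gamma (γ p + α) := Gamma_pos_of_pos (by linarith)
    have hGb : 0 < Gamma (γ p + 2*α) := Gamma_pos_of_pos (by linarith)
    have he := heq p ⟨hp0, hp2⟩
    rw [div_eq_iff hGa.ne'] at he
    rw [he]
    have hp1 : (0:ℝ) < 1 - p := by linarith
    field_simp
  refine ⟨h1, ?_⟩
  -- second limit
  have h2 : Tendsto (fun p => ((γ p) ^ α * (1-2*p) / C) ^ (1/α)) (𝓝[<] (1/2 : ℝ)) (𝓝 1) := by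
    have := (h1.div_const C)
    rw [div_self hC.ne'] at this
    have := this.rpow_const (p := 1/α) (Or.inl one_ne_zero)
    rwa [one_rpow] at this
  refine h2.congr' ?_
  filter_upwards [hIoo] with p hp
  obtain ⟨hp0, hp2⟩ := hp
  have hγ := hpos p ⟨hp0, hp2⟩
  have hu : 0 < 1 - 2*p := by linarith
  have hd : Real.Gamma (2*α) / (Real.Gamma α * (1-2*p)) = C / (1-2*p) := by
    rw [hCdef]; field_simp
  have e1 : (γ p) ^ α * (1-2*p) / C = (γ p) ^ α * ((1-2*p) / C) := by ring
  rw [e1, mul_rpow (by positivity) (by positivity), ← rpow_mul hγ.le, mul_one_div,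
    div_self hα.ne', rpow_one, hd, show C / (1-2*p) = ((1-2*p)/C)⁻¹ by rw [inv_div],
    inv_rpow (by positivity), div_inv_eq_mul]
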